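/- Define the eta coefficients by the Laurent expansion −ζ'(s)/ζ(s) = 1/(s−1) + ∑_{n=0}^∞ η_n (s−1)^n near s = 1, and the Stieltjes constants γ_n by ζ(s) = 1/(s−1) + ∑_{n=0}^∞ ((−1)^n/n!) γ_n (s−1)^n. Then for all n ≥ 0, η_n = (−1)^{n+1} [ ((n+1)/n!) γ_n + ∑_{k=0}^{n−1} ((−1)^{k−1}/(n−k−1)!) η_k γ_{n−k−1} ]. -/

import Mathlib

set_option maxHeartbeats 2000000

open Metric Filter FormalMultilinearSeries

lemma aux_radius {c : ℕ → ℂ} {w : ℂ} (hs : Summable fun n => c n * w ^ n) :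
    (‖w‖₊ : ENNReal) ≤ (ofScalars ℂ c).radius := by
  apply FormalMultilinearSeries.le_radius_of_tendsto (l := 0)
  have h := hs.tendsto_atTop_zero.norm
  simp only [norm_zero] at h
  have he : (fun n => ‖(ofScalars ℂ c) n‖ * ((‖w‖₊ : ℝ)) ^ n) = fun n => ‖c n * w ^ n‖ := by
    funext n
    rw [FormalMultilinearSeries.ofScalars_norm, coe_nnnorm, norm_mul, norm_pow]
  rw [he]
  exact h

lemma aux_shift {f : ℕ → ℂ} {S : ℂ} (h : HasSum (fun n => f (n + 1)) S) (h0 : f 0 = 0) :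
    HasSum f S := by
  have := (hasSum_nat_add_iff (f := f) 1).mp h
  simpa [h0] using this

lemma aux_unique {c d : ℕ → ℂ} {f : ℂ → ℂ} {r : ℝ} (hr : 0 < r)
    (hc : ∀ z : ℂ, z ∈ ball (0 : ℂ) r \ {0} → HasSum (fun n => c n * z ^ n) (f z))
    (hd : ∀ z : ℂ, z ∈ ball (0 : ℂ) r \ {0} → HasSum (fun n => d n * z ^ n) (f z)) :
    ∀ n, c n = d n := by
  set e : ℕ → ℂ := fun n => c n - d n with he_def
  have he : ∀ z ∈ ball (0 : ℂ) r \ {0}, HasSum (fun n => e n * z ^ n) 0 := by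
    intro z hz
    simpa [he_def, sub_mul] using (hc z hz).sub (hd z hz)
  set p := ofScalars ℂ e with hp_def
  have hwne : ((r / 2 : ℝ) : ℂ) ≠ 0 := by
    simp only [ne_eq, Complex.ofReal_eq_zero]
    positivity
  have hw : ((r / 2 : ℝ) : ℂ) ∈ ball (0 : ℂ) r \ {0} := by
    refine ⟨?_, by simpa using hwne⟩
    simp only [mem_ball, dist_zero_right, Complex.norm_real, Real.norm_eq_abs]
    rw [abs_of_pos (by linarith)]; linarith
  have hrad : 0 < p.radius := by
    refine lt_of_lt_of_le ?_ (aux_radius (he _ hw).summable)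
    simpa using hwne
  have hball := p.hasFPowerSeriesOnBall hrad
  have hsum0 : ∀ z ∈ ball (0 : ℂ) r \ {0}, p.sum z = 0 := by
    intro z hz
    have h1 := (he z hz).tsum_eq
    rw [FormalMultilinearSeries.sum]
    rw [← h1]
    exact tsum_congr fun n => by
      rw [hp_def, FormalMultilinearSeries.ofScalars_apply_eq, smul_eq_mul]
  have h0 : p.sum 0 = 0 := by
    have hcont : ContinuousAt p.sum 0 := hball.analyticAt.continuousAt
    have h1 : Tendsto p.sum (nhdsWithin (0 : ℂ) {(0:ℂ)}ᶜ) (nhds (p.sum 0)) :=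
      hcont.continuousWithinAt.tendsto
    have h2 : Tendsto p.sum (nhdsWithin (0 : ℂ) {(0:ℂ)}ᶜ) (nhds 0) := by
      apply Tendsto.congr' _ tendsto_const_nhds
      filter_upwards [self_mem_nhdsWithin,
        mem_nhdsWithin_of_mem_nhds (ball_mem_nhds (0:ℂ) hr)] with z hz1 hz2
      exact (hsum0 z ⟨hz2, hz1⟩).symm
    exact tendsto_nhds_unique h1 h2
  have heq : p.sum =ᶠ[nhds (0 : ℂ)] 0 := by
    filter_upwards [ball_mem_nhds (0:ℂ) hr] with z hz
    rcases eq_or_ne z 0 with h | h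
    · simpa [h] using h0
    · exact hsum0 z ⟨hz, h⟩
  have hp0 : p = 0 := hball.hasFPowerSeriesAt.eq_zero_of_eventually heq
  intro n
  have h1 : e n = 0 := by
    have h2 : p n (fun _ => (1 : ℂ)) = e n • (1 : ℂ) ^ n :=
      FormalMultilinearSeries.ofScalars_apply_eq _ _ _
    rw [hp0] at h2
    simpa using h2.symm
  exact sub_eq_zero.mp h1

theorem stmt12 (η γ : ℕ → ℂ)
    (hη : ∃ r > (0 : ℝ), ∀ s ∈ ball (1 : ℂ) r \ {1},
      HasSum (fun n : ℕ => η n * (s - 1) ^ n)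
        (-deriv riemannZeta s / riemannZeta s - 1 / (s - 1)))
    (hγ : ∃ r > (0 : ℝ), ∀ s ∈ ball (1 : ℂ) r \ {1},
      HasSum (fun n : ℕ => ((-1 : ℂ) ^ n / n.factorial) * γ n * (s - 1) ^ n)
        (riemannZeta s - 1 / (s - 1))) :
    ∀ n : ℕ, η n = (-1 : ℂ) ^ (n + 1) *
      (((n : ℂ) + 1) / n.factorial * γ n +
        ∑ k ∈ Finset.range n, ((-1 : ℂ) ^ (k + 1) / (n - k - 1).factorial) * η k * γ (n - k - 1)) := by
  obtain ⟨r1, hr1, H1⟩ := hη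
  obtain ⟨r2, hr2, H2⟩ := hγ
  set b : ℕ → ℂ := fun n => (-1 : ℂ) ^ n / n.factorial * γ n with hb_def
  set e : ℕ → ℂ := fun n => ∑ k ∈ Finset.range n, η k * b (n - 1 - k) with he_def
  set r0 : ℝ := min r1 r2 with hr0_def
  have hr0 : 0 < r0 := lt_min hr1 hr2
  -- shifted hypotheses
  have hmem : ∀ {ρ : ℝ} {z : ℂ}, ρ ≤ r0 → z ∈ ball (0:ℂ) ρ \ {0} →
      ∀ {ρ' : ℝ}, r0 ≤ ρ' → (1 + z) ∈ ball (1:ℂ) ρ' \ {1} ∧ z ≠ 0 := by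
    rintro ρ z hρ ⟨h1, h2⟩ ρ' hρ'
    simp only [mem_ball, dist_zero_right] at h1
    have hz0 : z ≠ 0 := by simpa using h2
    refine ⟨⟨?_, ?_⟩, hz0⟩
    · simp only [mem_ball, dist_eq_norm, add_sub_cancel_left]
      linarith
    · simp only [Set.mem_singleton_iff]
      intro h
      apply hz0
      have := congrArg (fun w => w - (1:ℂ)) h
      simpa using this
  have hA : ∀ z ∈ ball (0:ℂ) r0 \ {0}, HasSum (fun n => η n * z ^ n)
      (-deriv riemannZeta (1+z) / riemannZeta (1+z) - 1 / z) := by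
    intro z hz
    obtain ⟨hm, hz0⟩ := hmem le_rfl hz (min_le_left r1 r2)
    have := H1 (1+z) hm
    simpa using this
  have hB : ∀ z ∈ ball (0:ℂ) r0 \ {0}, HasSum (fun n => b n * z ^ n)
      (riemannZeta (1+z) - 1 / z) := by
    intro z hz
    obtain ⟨hm, hz0⟩ := hmem le_rfl hz (min_le_right r1 r2)
    have := H2 (1+z) hm
    simpa [hb_def] using this
  set pa := ofScalars ℂ η with hpa_def
  set pb := ofScalars ℂ b with hpb_def
  set G := pb.sum with hG_def
  have hwne : ((r0 / 2 : ℝ) : ℂ) ≠ 0 := by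
    simp only [ne_eq, Complex.ofReal_eq_zero]
    positivity
  have hwnorm : ‖((r0 / 2 : ℝ) : ℂ)‖ = r0 / 2 := by
    rw [Complex.norm_real, Real.norm_eq_abs, abs_of_pos (by linarith)]
  have hw : ((r0 / 2 : ℝ) : ℂ) ∈ ball (0 : ℂ) r0 \ {0} := by
    refine ⟨?_, by simpa using hwne⟩
    rw [mem_ball, dist_zero_right, hwnorm]
    linarith
  have hrada : (‖((r0 / 2 : ℝ) : ℂ)‖₊ : ENNReal) ≤ pa.radius :=
    aux_radius (hA _ hw).summable
  have hradb : (‖((r0 / 2 : ℝ) : ℂ)‖₊ : ENNReal) ≤ pb.radius :=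
    aux_radius (hB _ hw).summable
  have hradb0 : 0 < pb.radius := lt_of_lt_of_le (by simpa using hwne) hradb
  have hGball : HasFPowerSeriesOnBall G pb 0 pb.radius := pb.hasFPowerSeriesOnBall hradb0
  have hfd : HasFPowerSeriesOnBall (fderiv ℂ G) pb.derivSeries 0 pb.radius := hGball.fderiv
  have hGz : ∀ z ∈ ball (0:ℂ) r0 \ {0}, G z = riemannZeta (1+z) - 1 / z := by
    intro z hz
    rw [hG_def, FormalMultilinearSeries.sum, ← (hB z hz).tsum_eq]
    exact tsum_congr fun n => by
      rw [hpb_def, FormalMultilinearSeries.ofScalars_apply_eq, smul_eq_mul]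
  obtain ⟨δ, hδ, hδball⟩ := Metric.continuousAt_iff.mp hGball.analyticAt.continuousAt 1 one_pos
  set M : ℝ := ‖G 0‖ + 1 with hM_def
  have hM0 : 0 < M + 1 := by positivity
  set ρ : ℝ := min (min (r0 / 2) δ) (M + 1)⁻¹ with hρ_def
  have hρ : 0 < ρ := by
    apply lt_min (lt_min (by linarith) hδ)
    positivity
  -- key facts for z in the small punctured ball
  have hzfacts : ∀ z ∈ ball (0:ℂ) ρ \ {0}, z ≠ 0 ∧ ‖z‖ < r0 / 2 ∧
      z ∈ ball (0:ℂ) r0 \ {0} ∧ (‖z‖₊ : ENNReal) < pb.radius ∧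
      (‖z‖₊ : ENNReal) < pa.radius ∧ riemannZeta (1+z) ≠ 0 := by
    rintro z ⟨h1, h2⟩
    simp only [mem_ball, dist_zero_right] at h1
    have hz0 : z ≠ 0 := by simpa using h2
    have hzr2 : ‖z‖ < r0 / 2 := lt_of_lt_of_le h1 (le_trans (min_le_left _ _) (min_le_left _ _))
    have hzδ : ‖z‖ < δ := lt_of_lt_of_le h1 (le_trans (min_le_left _ _) (min_le_right _ _))
    have hzM : ‖z‖ < (M + 1)⁻¹ := lt_of_lt_of_le h1 (min_le_right _ _)
    have hzr0 : z ∈ ball (0:ℂ) r0 \ {0} := by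
      refine ⟨?_, h2⟩
      rw [mem_ball, dist_zero_right]
      linarith
    have hlt : (‖z‖₊ : ENNReal) < (‖((r0 / 2 : ℝ) : ℂ)‖₊ : ENNReal) := by
      rw [ENNReal.coe_lt_coe, ← NNReal.coe_lt_coe, coe_nnnorm, coe_nnnorm, hwnorm]
      exact hzr2
    refine ⟨hz0, hzr2, hzr0, lt_of_lt_of_le hlt hradb, lt_of_lt_of_le hlt hrada, ?_⟩
    -- riemannZeta (1+z) ≠ 0
    have hGbound : ‖G z‖ < M := by
      have := hδball (by rwa [dist_zero_right])
      have htr : ‖G z‖ ≤ dist (G z) (G 0) + ‖G 0‖ := by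
        rw [dist_eq_norm]
        calc ‖G z‖ = ‖(G z - G 0) + G 0‖ := by ring_nf
        _ ≤ ‖G z - G 0‖ + ‖G 0‖ := norm_add_le _ _
      rw [hM_def]
      linarith
    have hζ : riemannZeta (1+z) = 1 / z + G z := by
      rw [hGz z hzr0]; ring
    rw [hζ]
    intro hcon
    have hinv : ‖(1:ℂ) / z‖ = ‖z‖⁻¹ := by
      rw [norm_div, norm_one, one_div]
    have hzpos : 0 < ‖z‖ := norm_pos_iff.mpr hz0
    have hbig : M + 1 < ‖(1:ℂ)/z‖ := by
      rw [hinv]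
      have := (inv_lt_inv₀ (by positivity) hzpos).mpr hzM
      simpa using this
    have : ‖(1:ℂ)/z‖ ≤ ‖G z‖ := by
      have h3 : (1:ℂ)/z = -G z := by linear_combination hcon
      rw [h3, norm_neg]
    linarith
  have hLHS : ∀ z : ℂ, z ∈ ball (0:ℂ) ρ \ {0} → HasSum (fun n : ℕ => (-(n:ℂ) * b n) * z ^ n)
      (-(z * deriv riemannZeta (1+z)) - 1 / z) := by
    intro z hz
    obtain ⟨hz0, hzr2, hzr0, hzradb, hzrada, hζne⟩ := hzfacts z hz
    have hzmem : z ∈ Metric.eball (0:ℂ) pb.radius := by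
      rw [EMetric.mem_ball, edist_zero_right]
      exact hzradb
    -- sum for z * deriv G z
    have hds := (hfd.hasSum hzmem).mapL (ContinuousLinearMap.apply ℂ ℂ z)
    have hfdval : (ContinuousLinearMap.apply ℂ ℂ z) (fderiv ℂ G (0 + z)) = z * deriv G z := by
      rw [zero_add, ContinuousLinearMap.apply_apply]
      have h1 : fderiv ℂ G z z = z • fderiv ℂ G z 1 := by
        rw [← map_smul, smul_eq_mul, mul_one]
      rw [h1, fderiv_apply_one_eq_deriv, smul_eq_mul]
    rw [hfdval] at hds
    have hterm : (fun n => (ContinuousLinearMap.apply ℂ ℂ z) (pb.derivSeries n fun _ => z)) =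
        fun n : ℕ => (((n:ℂ) + 1) * b (n + 1)) * z ^ (n + 1) := by
      funext n
      rw [ContinuousLinearMap.apply_apply, FormalMultilinearSeries.derivSeries_apply_diag,
        hpb_def, FormalMultilinearSeries.ofScalars_apply_eq]
      push_cast [nsmul_eq_mul, smul_eq_mul]
      ring
    rw [hterm] at hds
    have hshift : HasSum (fun n : ℕ => ((n:ℂ) * b n) * z ^ n) (z * deriv G z) := by
      apply aux_shift _ (by simp)
      have : (fun n : ℕ => (((n:ℕ)+1 : ℂ) * b (n + 1)) * z ^ (n + 1)) =
          fun n : ℕ => (((n+1 : ℕ) : ℂ) * b (n + 1)) * z ^ (n + 1) := by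
        push_cast
        rfl
      exact hds.congr_fun fun n => by push_cast; ring_nf
    have hneg := hshift.neg
    -- derivative identity
    have hop : IsOpen (ball (0:ℂ) ρ \ {0}) := isOpen_ball.sdiff isClosed_singleton
    have hev : (fun w => riemannZeta (1+w)) =ᶠ[nhds z] (fun w => 1/w + G w) := by
      filter_upwards [hop.mem_nhds hz] with y hy
      obtain ⟨hy0, _, hyr0, _, _, _⟩ := hzfacts y hy
      rw [hGz y hyr0]
      ring
    have hGdiff : DifferentiableAt ℂ G z :=
      hGball.differentiableOn.differentiableAt (EMetric.isOpen_ball.mem_nhds hzmem)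
    have hd1 : deriv (fun w => (1:ℂ)/w + G w) z = -(1/z^2) + deriv G z := by
      have hone : (fun w : ℂ => (1:ℂ)/w + G w) = fun w => w⁻¹ + G w := by
        funext w
        rw [one_div]
      rw [hone, deriv_fun_add (differentiableAt_inv_iff.mpr hz0) hGdiff, deriv_inv, one_div]
    have hderiv : deriv riemannZeta (1+z) = -(1/z^2) + deriv G z := by
      calc deriv riemannZeta (1+z) = deriv (fun w => riemannZeta (1+w)) z :=
            (deriv_comp_const_add _ 1 z).symm
      _ = deriv (fun w => (1:ℂ)/w + G w) z := hev.deriv_eq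
      _ = -(1/z^2) + deriv G z := hd1
    have hval : -(z * deriv G z) = -(z * deriv riemannZeta (1+z)) - 1 / z := by
      rw [hderiv]
      field_simp
      ring
    have := hval ▸ hneg
    exact this.congr_fun fun n => by ring
  have hRHS : ∀ z : ℂ, z ∈ ball (0:ℂ) ρ \ {0} → HasSum (fun n : ℕ => (η n + b n + e n) * z ^ n)
      (-(z * deriv riemannZeta (1+z)) - 1 / z) := by
    intro z hz
    obtain ⟨hz0, hzr2, hzr0, hzradb, hzrada, hζne⟩ := hzfacts z hz
    have hAz := hA z hzr0
    have hBz := hB z hzr0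
    have Sa : Summable (fun n : ℕ => ‖η n * z ^ n‖) := by
      have h1 := pa.summable_norm_mul_pow (r := ‖z‖₊) hzrada
      refine h1.congr fun n => ?_
      rw [hpa_def, FormalMultilinearSeries.ofScalars_norm, coe_nnnorm, ← norm_pow, ← norm_mul]
    have Sb : Summable (fun n : ℕ => ‖b n * z ^ n‖) := by
      have h1 := pb.summable_norm_mul_pow (r := ‖z‖₊) hzradb
      refine h1.congr fun n => ?_
      rw [hpb_def, FormalMultilinearSeries.ofScalars_norm, coe_nnnorm, ← norm_pow, ← norm_mul]
    have hsummconv : Summable (fun n : ℕ =>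
        ∑ k ∈ Finset.range (n+1), (η k * z^k) * (b (n-k) * z^(n-k))) :=
      (summable_norm_sum_mul_range_of_summable_norm Sa Sb).of_norm
    have htsum := tsum_mul_tsum_eq_tsum_sum_range_of_summable_norm Sa Sb
    have hconv : HasSum (fun n : ℕ => ∑ k ∈ Finset.range (n+1), (η k * z^k) * (b (n-k) * z^(n-k)))
        ((-deriv riemannZeta (1+z) / riemannZeta (1+z) - 1/z) * (riemannZeta (1+z) - 1/z)) := by
      have h1 := hsummconv.hasSum
      rw [← htsum, hAz.tsum_eq, hBz.tsum_eq] at h1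
      exact h1
    have hterm : (fun n : ℕ => ∑ k ∈ Finset.range (n+1), (η k * z^k) * (b (n-k) * z^(n-k))) =
        fun n : ℕ => (∑ k ∈ Finset.range (n+1), η k * b (n-k)) * z ^ n := by
      funext n
      rw [Finset.sum_mul]
      refine Finset.sum_congr rfl fun k hk => ?_
      have hk' : k ≤ n := Finset.mem_range_succ_iff.mp hk
      have hzpow : z ^ k * z ^ (n - k) = z ^ n := by
        rw [← pow_add, Nat.add_sub_cancel' hk']
      calc (η k * z^k) * (b (n-k) * z^(n-k)) = η k * b (n-k) * (z^k * z^(n-k)) := by ring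
      _ = η k * b (n-k) * z ^ n := by rw [hzpow]
    rw [hterm] at hconv
    have hmul := hconv.mul_left z
    have heterm : (fun n : ℕ => z * ((∑ k ∈ Finset.range (n+1), η k * b (n-k)) * z ^ n)) =
        fun n : ℕ => e (n+1) * z ^ (n+1) := by
      funext n
      have he1 : e (n+1) = ∑ k ∈ Finset.range (n+1), η k * b (n-k) := by
        rw [he_def]
        simp only [Nat.add_sub_cancel]
      rw [he1]
      ring
    rw [heterm] at hmul
    have heshift : HasSum (fun n : ℕ => e n * z ^ n)
        (z * ((-deriv riemannZeta (1+z) / riemannZeta (1+z) - 1/z) *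
          (riemannZeta (1+z) - 1/z))) := by
      apply aux_shift hmul
      simp [he_def]
    have hsum := (hAz.add hBz).add heshift
    have hval : ((-deriv riemannZeta (1+z) / riemannZeta (1+z) - 1/z) + (riemannZeta (1+z) - 1/z))
        + z * ((-deriv riemannZeta (1+z) / riemannZeta (1+z) - 1/z) * (riemannZeta (1+z) - 1/z))
        = -(z * deriv riemannZeta (1+z)) - 1/z := by
      field_simp
      ring
    rw [hval] at hsum
    exact hsum.congr_fun fun n => by ring
  have hrec := aux_unique (f := fun z => -(z * deriv riemannZeta (1+z)) - 1 / z) hρ hLHS hRHS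
  intro n
  have h1 := hrec n
  have h2 : η n = -((n:ℂ)+1) * b n - e n := by linear_combination -h1
  rw [h2]
  have hbn : ∀ m : ℕ, b m = (-1 : ℂ)^m / m.factorial * γ m := fun m => rfl
  have hX : -((n:ℂ)+1) * b n = (-1 : ℂ)^(n+1) * (((n:ℂ)+1) / n.factorial * γ n) := by
    rw [hbn n, pow_succ]
    ring
  have hY : -(e n) = (-1 : ℂ)^(n+1) *
      ∑ k ∈ Finset.range n, ((-1 : ℂ)^(k+1) / (n-k-1).factorial) * η k * γ (n-k-1) := by
    rw [he_def, Finset.mul_sum, ← Finset.sum_neg_distrib]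
    refine Finset.sum_congr rfl fun k hk => ?_
    have hkn : k < n := Finset.mem_range.mp hk
    obtain ⟨m, hm⟩ : ∃ m, n = m + k + 1 := ⟨n - k - 1, by omega⟩
    have e1 : n - 1 - k = m := by omega
    have e2 : n - k - 1 = m := by omega
    have e3 : n + 1 = m + k + 2 := by omega
    rw [e1, e2, e3, hbn m]
    have hsign : ((-1:ℂ))^(m+k+2) * (-1)^(k+1) = -(-1)^m := by
      rw [← pow_add]
      have e4 : m + k + 2 + (k+1) = 2*(k+1) + (m+1) := by ring
      rw [e4, pow_add, pow_mul]
      norm_num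
      rw [pow_succ]
      ring
    linear_combination (-(η k * γ m) / (m.factorial : ℂ)) * hsign
  rw [mul_add, ← hX, ← hY]
  ring
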